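/- Let β ∈ (0,1), h > 0, and let S₂ be a positive-integer-valued random variable whose discrete hazard rate μ₂ is increasing (IHR). Define w₂(n) = h · (1/(1−β) − ∑_{i=0}^{∞} β^i p̄₂(i|n)) / (∑_{i=0}^{∞} β^i p̄₂(i|n)). Then w₂(n) is increasing in n, and for every n, w₂(n) ≥ h μ₂(n) β/(1−β). -/

import Mathlib

open MeasureTheory Filter

/-- Survival probability `P(S ≥ n+1)`. -/
noncomputable def surv {Ω : Type*} [MeasurableSpace Ω] (P : Measure Ω) (S : Ω → ℕ) (n : ℕ) : ℝ :=
  (P {ω | n + 1 ≤ S ω}).toReal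

/-- Discrete hazard rate `μ(n) = P(S = n+1 | S ≥ n+1)`. -/
noncomputable def haz {Ω : Type*} [MeasurableSpace Ω] (P : Measure Ω) (S : Ω → ℕ) (n : ℕ) : ℝ :=
  (P {ω | S ω = n + 1}).toReal / surv P S n

/-- Conditional survival probability `p̄(i|n) = P(S ≥ n+i+1 | S ≥ n+1)`. -/
noncomputable def pbar {Ω : Type*} [MeasurableSpace Ω] (P : Measure Ω) (S : Ω → ℕ)
    (i n : ℕ) : ℝ :=
  surv P S (n + i) / surv P S n

/-- `w₂(n) = h (1/(1−β) − ∑ β^i p̄₂(i|n)) / (∑ β^i p̄₂(i|n))`. -/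
noncomputable def w2Idx {Ω : Type*} [MeasurableSpace Ω] (P : Measure Ω) (S : Ω → ℕ)
    (β h : ℝ) (n : ℕ) : ℝ :=
  h * (1 / (1 - β) - ∑' i : ℕ, β ^ i * pbar P S i n) / (∑' i : ℕ, β ^ i * pbar P S i n)

lemma surv_succ_sub {Ω : Type*} [MeasurableSpace Ω] (P : Measure Ω)
    [IsProbabilityMeasure P] (S : Ω → ℕ) (hS : Measurable S) (n : ℕ) :
    surv P S (n + 1) = surv P S n - (P {ω | S ω = n + 1}).toReal := by
  have hset : {ω | n + 1 ≤ S ω} = {ω | S ω = n + 1} ∪ {ω | n + 1 + 1 ≤ S ω} := by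
    ext ω; simp only [Set.mem_setOf_eq, Set.mem_union]; omega
  have hdisj : Disjoint {ω | S ω = n + 1} {ω | n + 1 + 1 ≤ S ω} := by
    rw [Set.disjoint_left]; intro ω h1 h2
    simp only [Set.mem_setOf_eq] at h1 h2; omega
  have hm2 : MeasurableSet {ω | n + 1 + 1 ≤ S ω} := by
    have : {ω | n + 1 + 1 ≤ S ω} = S ⁻¹' (Set.Ici (n + 2)) := by
      ext ω; simp [Set.mem_preimage]; omega
    rw [this]; exact hS measurableSet_Ici
  have := measure_union (μ := P) hdisj hm2
  rw [← hset] at this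
  simp only [surv]
  rw [this, ENNReal.toReal_add (measure_ne_top P _) (measure_ne_top P _)]
  ring

section aux
variable {Ω : Type*} [MeasurableSpace Ω] (P : Measure Ω) [IsProbabilityMeasure P]
  (S : Ω → ℕ) (hS : Measurable S) (hpos : ∀ n, 0 < surv P S n)

include hS hpos

lemma haz_nonneg (n : ℕ) : 0 ≤ haz P S n :=
  div_nonneg ENNReal.toReal_nonneg (hpos n).le

lemma haz_le_one (n : ℕ) : haz P S n ≤ 1 := by
  rw [haz, div_le_one (hpos n)]
  exact ENNReal.toReal_mono (measure_ne_top P _)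
    (measure_mono (by intro ω hω; simp only [Set.mem_setOf_eq] at *; omega))

lemma surv_succ_mul (n : ℕ) : surv P S (n + 1) = surv P S n * (1 - haz P S n) := by
  have h1 : haz P S n * surv P S n = (P {ω | S ω = n + 1}).toReal := by
    rw [haz, div_mul_cancel₀]; exact (hpos n).ne'
  rw [surv_succ_sub P S hS n, ← h1]; ring

lemma pbar_nonneg (i n : ℕ) : 0 ≤ pbar P S i n :=
  div_nonneg ENNReal.toReal_nonneg (hpos n).le

lemma pbar_prod (i n : ℕ) :
    pbar P S i n = ∏ j ∈ Finset.range i, (1 - haz P S (n + j)) := by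
  induction i with
  | zero => simp [pbar, div_self (hpos n).ne']
  | succ k ih =>
      rw [Finset.prod_range_succ, ← ih]
      rw [pbar, pbar, ← Nat.add_assoc, surv_succ_mul P S hS hpos (n + k)]
      ring

lemma pbar_succ (i n : ℕ) :
    pbar P S (i + 1) n = pbar P S i n * (1 - haz P S (n + i)) := by
  rw [pbar_prod P S hS hpos, pbar_prod P S hS hpos, Finset.prod_range_succ]

lemma pbar_le_one (i n : ℕ) : pbar P S i n ≤ 1 := by
  rw [pbar_prod P S hS hpos]
  apply Finset.prod_le_one
  · intro j _; have := haz_le_one P S hS hpos (n + j); linarith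
  · intro j _; have := haz_nonneg P S hS hpos (n + j); linarith

end aux

/-- For IHR `S₂`, `w₂(n)` is increasing in `n` and `w₂(n) ≥ h μ₂(n) β/(1−β)`. -/
theorem IHR_w2_monotone_and_bound {Ω : Type*} [MeasurableSpace Ω] (P : Measure Ω)
    [IsProbabilityMeasure P] (S : Ω → ℕ) (hS : Measurable S) (hS1 : ∀ ω, 1 ≤ S ω)
    (β h : ℝ) (hβ : β ∈ Set.Ioo (0:ℝ) 1) (hh : 0 < h)
    (hpos : ∀ n, 0 < surv P S n)
    (hIHR : ∀ n, haz P S n ≤ haz P S (n + 1)) :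
    Monotone (fun n => w2Idx P S β h n) ∧
    ∀ n : ℕ, h * haz P S n * (β / (1 - β)) ≤ w2Idx P S β h n := by
  obtain ⟨hβ0, hβ1⟩ := hβ
  have h1β : 0 < 1 - β := by linarith
  have hhaz0 := haz_nonneg P S hS hpos
  have hhaz1 := haz_le_one P S hS hpos
  have hpb0 := pbar_nonneg P S hS hpos
  have hpb1 := pbar_le_one P S hS hpos
  have hpbs := pbar_succ P S hS hpos
  have hhazmono : Monotone (haz P S) := monotone_nat_of_le_succ hIHR
  set g : ℕ → ℝ := fun n => ∑' i : ℕ, β ^ i * pbar P S i n with hg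
  -- summability
  have hterm0 : ∀ n i, 0 ≤ β ^ i * pbar P S i n := fun n i =>
    mul_nonneg (pow_nonneg hβ0.le i) (hpb0 i n)
  have htermle : ∀ n i, β ^ i * pbar P S i n ≤ β ^ i := fun n i =>
    mul_le_of_le_one_right (pow_nonneg hβ0.le i) (hpb1 i n)
  have hsum : ∀ n, Summable (fun i => β ^ i * pbar P S i n) := fun n =>
    Summable.of_nonneg_of_le (hterm0 n) (htermle n)
      (summable_geometric_of_lt_one hβ0.le hβ1)
  have hpbar00 : ∀ n, pbar P S 0 n = 1 := fun n => by
    simp [pbar, div_self (hpos n).ne']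
  have hg1 : ∀ n, 1 ≤ g n := by
    intro n
    have := Summable.le_tsum (hsum n) 0 (fun i _ => hterm0 n i)
    simpa [hpbar00 n] using this
  have hgpos : ∀ n, 0 < g n := fun n => lt_of_lt_of_le one_pos (hg1 n)
  -- antitone of g
  have hpbanti : ∀ i n, pbar P S i (n + 1) ≤ pbar P S i n := by
    intro i n
    rw [pbar_prod P S hS hpos, pbar_prod P S hS hpos]
    apply Finset.prod_le_prod
    · intro j _; have := hhaz1 (n + 1 + j); linarith
    · intro j _
      have : haz P S (n + j) ≤ haz P S (n + 1 + j) := by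
        apply hhazmono; omega
      linarith
  have hganti : ∀ n, g (n + 1) ≤ g n := by
    intro n
    apply Summable.tsum_le_tsum _ (hsum (n + 1)) (hsum n)
    intro i
    exact mul_le_mul_of_nonneg_left (hpbanti i n) (pow_nonneg hβ0.le i)
  -- key inequality for the bound
  have hkey : ∀ n, β * haz P S n * g n ≤ 1 - (1 - β) * g n := by
    intro n
    -- T = ∑ β^i pbar(i+1)
    have hsumT : Summable (fun i => β ^ i * pbar P S (i + 1) n) :=
      Summable.of_nonneg_of_le
        (fun i => mul_nonneg (pow_nonneg hβ0.le i) (hpb0 (i + 1) n))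
        (fun i => mul_le_of_le_one_right (pow_nonneg hβ0.le i) (hpb1 (i + 1) n))
        (summable_geometric_of_lt_one hβ0.le hβ1)
    set T : ℝ := ∑' i : ℕ, β ^ i * pbar P S (i + 1) n with hT
    have hshift : g n = 1 + β * T := by
      show (∑' i : ℕ, β ^ i * pbar P S i n) = 1 + β * T
      rw [Summable.tsum_eq_zero_add (hsum n)]
      congr 1
      · simp [hpbar00 n]
      · rw [hT, ← tsum_mul_left]
        congr 1; funext i; ring
    -- hazard-weighted sum
    have hhw : haz P S n * g n ≤ g n - T := by
      have e1 : ∀ i, β ^ i * pbar P S i n - β ^ i * pbar P S (i + 1) n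
          = β ^ i * pbar P S i n * haz P S (n + i) := by
        intro i; rw [hpbs i n]; ring
      have hsub : g n - T = ∑' i : ℕ, β ^ i * pbar P S i n * haz P S (n + i) := by
        show (∑' i : ℕ, β ^ i * pbar P S i n) - T = _
        rw [hT, ← Summable.tsum_sub (hsum n) hsumT]
        exact tsum_congr e1
      rw [hsub]
      have : haz P S n * g n = ∑' i : ℕ, haz P S n * (β ^ i * pbar P S i n) := by
        rw [tsum_mul_left]
      rw [this]
      apply Summable.tsum_le_tsum _ ((hsum n).mul_left _) _
      · intro i
        have hmono : haz P S n ≤ haz P S (n + i) := hhazmono (Nat.le_add_right n i)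
        nlinarith [hterm0 n i, hhaz0 n]
      · rw [show (fun i => β ^ i * pbar P S i n * haz P S (n + i))
            = fun i => β ^ i * pbar P S i n - β ^ i * pbar P S (i + 1) n from
            funext fun i => (e1 i).symm]
        exact (hsum n).sub hsumT
    nlinarith [mul_le_mul_of_nonneg_left hhw hβ0.le, hshift, hβ0]
  constructor
  · apply monotone_nat_of_le_succ
    intro n
    simp only [w2Idx]
    rw [div_le_div_iff₀ (hgpos n) (hgpos (n + 1))]
    have h1 : (0:ℝ) ≤ 1 / (1 - β) := by positivity
    nlinarith [hganti n, hgpos (n + 1), hgpos n, hh.le,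
      mul_le_mul_of_nonneg_left (hganti n) (mul_nonneg hh.le h1)]
  · intro n
    rw [w2Idx, le_div_iff₀ (hgpos n)]
    have key := hkey n
    have e1 : h * (1 / (1 - β) - g n) = h * (1 - (1 - β) * g n) / (1 - β) := by
      field_simp
    have e2 : h * haz P S n * (β / (1 - β)) * g n
        = h * (β * haz P S n * g n) / (1 - β) := by ring
    rw [e1, e2, div_le_div_iff₀ h1β h1β]
    nlinarith [mul_le_mul_of_nonneg_left key hh.le, h1β]
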